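/- Let G be a group acting by isometries on the metric space S³ × ℝ (standard product metric) cocompactly and fixed point freely, with G discrete. Then G contains an element g whose action on the ℝ factor is a nontrivial translation, and the infinite cyclic subgroup generated by g has finite index in G. In particular, G is virtually infinite cyclic. -/

import Mathlib

/-- The metric space `S³ × ℝ` with the standard product metric. -/
abbrev S3xR : Type := (Metric.sphere (0 : EuclideanSpace ℝ (Fin 4)) 1) × ℝ

namespace VCaux

noncomputable def pt : Metric.sphere (0 : EuclideanSpace ℝ (Fin 4)) 1 :=
  ⟨EuclideanSpace.single 0 1, by simp⟩

lemma sphere_dist_le (x y : Metric.sphere (0 : EuclideanSpace ℝ (Fin 4)) 1) :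
    dist x y ≤ 2 := by
  have hx : dist (x : EuclideanSpace ℝ (Fin 4)) 0 = 1 := x.2
  have hy : dist (y : EuclideanSpace ℝ (Fin 4)) 0 = 1 := y.2
  calc dist x y = dist (x : EuclideanSpace ℝ (Fin 4)) y := Subtype.dist_eq x y
    _ ≤ dist (x : EuclideanSpace ℝ (Fin 4)) 0 + dist 0 (y : EuclideanSpace ℝ (Fin 4)) :=
        dist_triangle _ _ _
    _ ≤ 2 := by rw [hx, dist_comm]; linarith

lemma snd_dist_le (p q : S3xR) : dist p.2 q.2 ≤ dist p q := by
  rw [Prod.dist_eq]; exact le_max_right _ _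

/-- The second coordinate of the image of an isometry does not depend on the
first coordinate of the argument. -/
lemma snd_apply_const (f : S3xR ≃ᵢ S3xR) (x y : Metric.sphere (0 : EuclideanSpace ℝ (Fin 4)) 1)
    (s : ℝ) : (f (x, s)).2 = (f (y, s)).2 := by
  set b := (f (x, s)).2 with hb
  have key : ∀ c : ℝ, |c - b| = 3 → |(f (y, s)).2 - c| ≤ 3 := by
    intro c hc
    set B : S3xR := ((f (x, s)).1, c) with hB
    set q : S3xR := f.symm B with hq
    have hfq : f q = B := f.apply_symm_apply B
    have hdxq : dist (x, s) q = 3 := by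
      have : dist (f (x, s)) (f q) = dist ((x, s) : S3xR) q := f.dist_eq _ _
      rw [hfq] at this
      rw [← this, Prod.dist_eq]
      have h1 : dist (f (x, s)).1 B.1 = 0 := by simp [hB]
      have h2 : dist (f (x, s)).2 B.2 = 3 := by
        rw [Real.dist_eq, abs_sub_comm, ← hb]; exact hc
      rw [h1, h2]; norm_num
    have hq2 : |s - q.2| = 3 := by
      have hle : dist (x, s).2 q.2 ≤ dist ((x, s) : S3xR) q := snd_dist_le _ _
      rw [hdxq] at hle
      have hfst : dist (x, s).1 q.1 ≤ 2 := sphere_dist_le _ _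
      have : dist ((x, s) : S3xR) q = max (dist (x, s).1 q.1) (dist (x,s).2 q.2) := Prod.dist_eq
      rw [hdxq] at this
      have : dist (x, s).2 q.2 = 3 := by
        rcases max_cases (dist (x, s).1 q.1) (dist (x,s).2 q.2) with ⟨h, _⟩ | ⟨h, _⟩ <;> linarith [this]
      simpa [Real.dist_eq] using this
    have hdyq : dist ((y, s) : S3xR) q = 3 := by
      rw [Prod.dist_eq]
      have hfst : dist (y, s).1 q.1 ≤ 2 := sphere_dist_le _ _
      have h2 : dist (y, s).2 q.2 = 3 := by simpa [Real.dist_eq] using hq2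
      rw [h2]; rcases max_cases (dist (y, s).1 q.1) (3:ℝ) with ⟨h, _⟩ | ⟨h, _⟩ <;> linarith
    have : dist (f (y, s)) B = 3 := by
      rw [← hfq, f.dist_eq]; exact hdyq
    calc |(f (y, s)).2 - c| = dist (f (y,s)).2 B.2 := by rw [Real.dist_eq, hB]
      _ ≤ dist (f (y, s)) B := snd_dist_le _ _
      _ ≤ 3 := le_of_eq this
  have h1 := key (b + 3) (by rw [show b + 3 - b = (3:ℝ) from by ring]; norm_num)
  have h2 := key (b - 3) (by rw [show b - 3 - b = (-3:ℝ) from by ring]; norm_num)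
  rw [abs_le] at h1 h2
  have := h1.1; have := h1.2; have := h2.1; have := h2.2
  linarith [h1.1, h2.2]

noncomputable def psi (f : S3xR ≃ᵢ S3xR) (s : ℝ) : ℝ := (f (pt, s)).2

lemma psi_snd (f : S3xR ≃ᵢ S3xR) (x : S3xR) : (f x).2 = psi f x.2 :=
  snd_apply_const f x.1 pt x.2

lemma psi_symm_psi (f : S3xR ≃ᵢ S3xR) (s : ℝ) : psi f.symm (psi f s) = s := by
  have h1 : psi f.symm (psi f s) = (f.symm (f (pt, s))).2 := by
    have : (f.symm (f (pt,s))).2 = psi f.symm (f (pt,s)).2 := psi_snd f.symm _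
    rw [this]; rfl
  rw [h1, f.symm_apply_apply]

lemma psi_dist (f : S3xR ≃ᵢ S3xR) (s t : ℝ) : |psi f s - psi f t| = |s - t| := by
  have lip : ∀ g : S3xR ≃ᵢ S3xR, ∀ u v : ℝ, |psi g u - psi g v| ≤ |u - v| := by
    intro g u v
    have h1 : dist (psi g u) (psi g v) ≤ dist (g (pt, u)) (g (pt, v)) := snd_dist_le _ _
    rw [g.dist_eq, Prod.dist_eq] at h1
    simp only [dist_self] at h1
    simpa [Real.dist_eq] using h1.trans (by simp [Real.dist_eq, le_max_iff])
  refine le_antisymm (lip f s t) ?_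
  have := lip f.symm (psi f s) (psi f t)
  rwa [psi_symm_psi, psi_symm_psi] at this

lemma exists_affine (f : S3xR ≃ᵢ S3xR) :
    ∃ ε a : ℝ, (ε = 1 ∨ ε = -1) ∧ ∀ x : S3xR, (f x).2 = ε * x.2 + a := by
  set a := psi f 0 with ha
  set ε := psi f 1 - a with he
  have h10 : |ε| = 1 := by
    have := psi_dist f 1 0; simpa [← ha, ← he] using this
  have hε : ε = 1 ∨ ε = -1 := by
    rcases abs_cases ε with ⟨h, _⟩ | ⟨h, _⟩
    · left; linarith [h10, h]
    · right; linarith [h10, h]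
  refine ⟨ε, a, hε, fun x => ?_⟩
  rw [psi_snd f x]
  set s := x.2
  have h0 : |psi f s - a| = |s| := by simpa using psi_dist f s 0
  have h1 : |psi f s - (ε + a)| = |s - 1| := by
    have := psi_dist f s 1
    have hps1 : psi f 1 = ε + a := by rw [he]; ring
    rwa [hps1] at this
  rw [abs_eq_abs] at h0 h1
  rcases hε with hE | hE <;> rcases h0 with h0 | h0 <;> rcases h1 with h1 | h1 <;>
    rw [hE] <;> rw [hE] at h1 <;> linarith

end VCaux

namespace VCaux

lemma zpow_snd (g : S3xR ≃ᵢ S3xR) (a : ℝ) (h : ∀ x : S3xR, (g x).2 = x.2 + a) (n : ℤ) :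
    ∀ x : S3xR, ((g ^ n) x).2 = x.2 + n * a := by
  have hnat : ∀ m : ℕ, ∀ x : S3xR, ((g ^ m) x).2 = x.2 + m * a := by
    intro m
    induction m with
    | zero => intro x; simp
    | succ k ih =>
      intro x
      have : (g ^ (k+1)) x = g ((g ^ k) x) := by rw [pow_succ']; rfl
      rw [this, h, ih]; push_cast; ring
  intro x
  rcases n with m | m
  · simpa using hnat m x
  · have key := hnat (m+1) ((g ^ (m+1))⁻¹ x)
    have happ : (g ^ (m+1)) ((g ^ (m+1))⁻¹ x) = x := by
      simp
    rw [happ] at key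
    have : (g ^ (Int.negSucc m)) x = ((g ^ (m+1))⁻¹) x := by
      rw [zpow_negSucc]
    rw [this]
    push_cast at key ⊢
    linarith

lemma exists_int_abs_le (b c : ℝ) (hb : b ≠ 0) : ∃ n : ℤ, |c + n * b| ≤ |b| := by
  refine ⟨-⌊c / b⌋, ?_⟩
  have h : c + (-⌊c / b⌋ : ℤ) * b = b * Int.fract (c / b) := by
    rw [Int.fract]
    push_cast
    field_simp
    ring
  rw [h, abs_mul]
  have hf : |Int.fract (c / b)| = Int.fract (c / b) := abs_of_nonneg (Int.fract_nonneg _)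
  rw [hf]
  nlinarith [Int.fract_nonneg (c / b), Int.fract_lt_one (c / b), abs_nonneg b,
    abs_pos.mpr hb, Int.fract_nonneg (c/b)]

end VCaux

open VCaux

/-- A discrete group `G` acting by isometries on `S³ × ℝ` cocompactly and fixed point freely
contains an element `g` acting as a nontrivial translation on the `ℝ` factor, and the infinite
cyclic subgroup generated by `g` has finite index in `G`; in particular `G` is virtually
infinite cyclic. -/
theorem virtually_cyclic_of_cocompact_free_action
    (G : Subgroup (S3xR ≃ᵢ S3xR))
    (hdisc : ∀ K : Set S3xR, IsCompact K →
      {g : G | ∃ x ∈ K, (g : S3xR ≃ᵢ S3xR) x ∈ K}.Finite)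
    (hcocompact : ∃ K : Set S3xR, IsCompact K ∧ ∀ x : S3xR, ∃ g ∈ G, g x ∈ K)
    (hfree : ∀ g ∈ G, g ≠ 1 → ∀ x : S3xR, g x ≠ x) :
    ∃ g : G, (∃ a : ℝ, a ≠ 0 ∧ ∀ x : S3xR, ((g : S3xR ≃ᵢ S3xR) x).2 = x.2 + a) ∧
      (Subgroup.zpowers g).FiniteIndex := by
  classical
  obtain ⟨K, hK, hKcov⟩ := hcocompact
  -- bound the second coordinate of K
  obtain ⟨M0, hM0⟩ : ∃ M0 : ℝ, ∀ k ∈ K, |k.2| ≤ M0 := by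
    have hcs : IsCompact (Prod.snd '' K) := hK.image continuous_snd
    rcases hcs.isBounded.subset_closedBall 0 with ⟨r, hr⟩
    refine ⟨r, fun k hk => ?_⟩
    have := hr ⟨k, hk, rfl⟩
    simpa [Real.dist_eq] using this
  set M : ℝ := max M0 0 with hM
  have hMnn : 0 ≤ M := le_max_right _ _
  have hMb : ∀ k ∈ K, |k.2| ≤ M := fun k hk => (hM0 k hk).trans (le_max_left _ _)
  -- for every s there is a group element bringing level s into the bounded window
  have step : ∀ s : ℝ, ∃ g ∈ G, ∃ ε a : ℝ, (ε = 1 ∨ ε = -1) ∧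
      (∀ x : S3xR, (g x).2 = ε * x.2 + a) ∧ |ε * s + a| ≤ M := by
    intro s
    obtain ⟨g, hgG, hgK⟩ := hKcov (pt, s)
    obtain ⟨ε, a, hε, hform⟩ := exists_affine g
    refine ⟨g, hgG, ε, a, hε, hform, ?_⟩
    have := hMb _ hgK
    rw [hform (pt, s)] at this
    exact this
  -- find a translation element
  have main : ∃ gs ∈ G, ∃ as : ℝ, as ≠ 0 ∧ ∀ x : S3xR, (gs x).2 = x.2 + as := by
    obtain ⟨g, hgG, ε, a, hε, hform, hbd⟩ := step (3 * M + 1)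
    rcases hε with hE | hE
    · refine ⟨g, hgG, a, ?_, ?_⟩
      · rw [hE] at hbd; rw [abs_le] at hbd; intro h0; rw [h0] at hbd; linarith [hbd.2]
      · intro x; rw [hform x, hE]; ring_nf
    · obtain ⟨h, hhG, ε', a', hε', hform', hbd'⟩ := step (5 * M + 3)
      rcases hε' with hE' | hE'
      · refine ⟨h, hhG, a', ?_, ?_⟩
        · rw [hE'] at hbd'; rw [abs_le] at hbd'; intro h0; rw [h0] at hbd'; linarith [hbd'.2]
        · intro x; rw [hform' x, hE']; ring_nf
      · -- both reflections; compose
        refine ⟨g * h, mul_mem hgG hhG, a - a', ?_, ?_⟩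
        · rw [hE] at hbd; rw [hE'] at hbd'; rw [abs_le] at hbd hbd'
          intro h0
          have : a = a' := by linarith
          rw [this] at hbd; linarith [hbd.1, hbd'.2]
        · intro x
          have : (g * h) x = g (h x) := rfl
          rw [this, hform, hform', hE, hE']; ring
  obtain ⟨gs, hgsG, as, has, htrans⟩ := main
  set gG : G := ⟨gs, hgsG⟩ with hgG
  refine ⟨gG, ⟨as, has, htrans⟩, ?_⟩
  -- finite index
  set H : Subgroup G := Subgroup.zpowers gG with hH
  set K' : Set S3xR := Set.univ ×ˢ Set.Icc (-|as|) |as| with hK'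
  have hK'c : IsCompact K' := isCompact_univ.prod isCompact_Icc
  have hS : {k : G | ∃ x ∈ K', (k : S3xR ≃ᵢ S3xR) x ∈ K'}.Finite := hdisc K' hK'c
  have hsurj : ∀ q : G ⧸ H, ∃ k ∈ {k : G | ∃ x ∈ K', (k : S3xR ≃ᵢ S3xR) x ∈ K'},
      QuotientGroup.mk k = q := by
    intro q
    induction q using QuotientGroup.induction_on with
    | H h =>
      obtain ⟨ε, a, hε, hform⟩ := exists_affine (h : S3xR ≃ᵢ S3xR)
      have hb : ε * as ≠ 0 := by
        rcases hε with hE | hE <;> rw [hE] <;> simpa using has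
      obtain ⟨n, hn⟩ := exists_int_abs_le (ε * as) a hb
      refine ⟨h * gG ^ n, ?_, ?_⟩
      · refine ⟨(pt, 0), ⟨Set.mem_univ _, by simp [abs_nonneg]⟩, ?_⟩
        have happ : ((h * gG ^ n : G) : S3xR ≃ᵢ S3xR) (pt, 0)
            = (h : S3xR ≃ᵢ S3xR) (((gs : S3xR ≃ᵢ S3xR) ^ n) (pt, 0)) := by
          rfl
        constructor
        · exact Set.mem_univ _
        · show (((h * gG ^ n : G) : S3xR ≃ᵢ S3xR) (pt, 0)).2 ∈ Set.Icc (-|as|) |as|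
          rw [happ, hform, zpow_snd gs as htrans n]
          rw [Set.mem_Icc, ← abs_le]
          calc |ε * ((0:ℝ) + n * as) + a| = |a + n * (ε * as)| := by ring_nf
            _ ≤ |ε * as| := hn
            _ = |as| := by rcases hε with hE | hE <;> rw [hE] <;> simp
      · rw [QuotientGroup.eq]
        refine ⟨-n, ?_⟩
        group
  have hfinq : Finite (G ⧸ H) := by
    have himg : (Set.univ : Set (G ⧸ H)) ⊆ QuotientGroup.mk '' {k : G | ∃ x ∈ K', (k : S3xR ≃ᵢ S3xR) x ∈ K'} := by
      rintro q -
      obtain ⟨k, hk, hkq⟩ := hsurj q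
      exact ⟨k, hk, hkq⟩
    have := (hS.image QuotientGroup.mk).subset himg
    exact Set.finite_univ_iff.mp this
  exact Subgroup.finiteIndex_of_finite_quotient
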